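/- In fixed design kernel ridge regression, suppose K̃ + λI is a (Δ₁, Δ₂)-spectral approximation of K + λI with Δ₁ ∈ [0,1), Δ₂ ≥ 0, let m = rank(K̃), and let R(f_{K̃}) = (λ²/n)ȳᵀ(K̃+λI)^{-2}ȳ + (σ²/n)tr(K̃²(K̃+λI)^{-2}) and R̂(f_K) = (λ/n)ȳᵀ(K+λI)^{-1}ȳ + (σ²/n)tr(K(K+λI)^{-1}). Then R(f_{K̃}) ≤ (1/(1-Δ₁)) R̂(f_K) + (Δ₂/(1+Δ₂))·(m/n)·σ². -/

import Mathlib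

open Matrix

section Helpers
variable {n : ℕ}
variable {n : ℕ}

section Helpers

lemma psd_diag_nonneg {M : Matrix (Fin n) (Fin n) ℝ} (hM : M.PosSemidef) (i : Fin n) :
    0 ≤ M i i := by
  simpa [Matrix.mulVec_single, dotProduct, Pi.single_apply, Finset.sum_ite_eq] using
    hM.dotProduct_mulVec_nonneg (Pi.single i 1)

lemma psd_dot_le {M N : Matrix (Fin n) (Fin n) ℝ} (h : (N - M).PosSemidef) (y : Fin n → ℝ) :
    y ⬝ᵥ M *ᵥ y ≤ y ⬝ᵥ N *ᵥ y := by
  have h2 := h.dotProduct_mulVec_nonneg y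
  simp only [Matrix.sub_mulVec, dotProduct_sub, star_trivial] at h2
  linarith

lemma add_smul_one_posDef {A : Matrix (Fin n) (Fin n) ℝ} (hA : A.PosSemidef) {l : ℝ}
    (hl : 0 < l) : (A + l • 1).PosDef := by
  have h1 : (l • (1 : Matrix (Fin n) (Fin n) ℝ)) = Matrix.diagonal (fun _ => l) := by
    ext i j; by_cases h : i = j <;> simp [h, Matrix.one_apply]
  rw [h1]
  exact Matrix.PosDef.posSemidef_add hA (Matrix.posDef_diagonal_iff.mpr fun _ => hl)

lemma smul_posDef {A : Matrix (Fin n) (Fin n) ℝ} (hA : A.PosDef) {c : ℝ} (hc : 0 < c) :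
    (c • A).PosDef := by
  refine Matrix.PosDef.of_dotProduct_mulVec_pos ?_ (fun x hx => ?_)
  · unfold Matrix.IsHermitian
    rw [conjTranspose_smul, hA.isHermitian]
    simp
  · rw [Matrix.smul_mulVec, dotProduct_smul, smul_eq_mul]
    exact mul_pos hc (hA.dotProduct_mulVec_pos hx)

lemma inv_antitone {A B : Matrix (Fin n) (Fin n) ℝ} (hA : A.PosDef) (hB : B.PosDef)
    (h : (B - A).PosSemidef) : (A⁻¹ - B⁻¹).PosSemidef := by
  have e1 : A * A⁻¹ = 1 := Matrix.mul_nonsing_inv _ (Matrix.isUnit_iff_isUnit_det _ |>.mp hA.isUnit)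
  have e2 : A⁻¹ * A = 1 := Matrix.nonsing_inv_mul _ (Matrix.isUnit_iff_isUnit_det _ |>.mp hA.isUnit)
  have e3 : B * B⁻¹ = 1 := Matrix.mul_nonsing_inv _ (Matrix.isUnit_iff_isUnit_det _ |>.mp hB.isUnit)
  have hBinvH : B⁻¹ᴴ = B⁻¹ := (hB.posSemidef.inv).isHermitian
  have hEH : (B - A)ᴴ = (B - A) := h.isHermitian
  have key : A⁻¹ - B⁻¹ =
      B⁻¹ * (B - A) * B⁻¹ᴴ + (B⁻¹ * (B - A)) * A⁻¹ * (B⁻¹ * (B - A))ᴴ := by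
    rw [conjTranspose_mul, hBinvH, hEH]
    have base : B⁻¹ * (B - A) * A⁻¹ = A⁻¹ - B⁻¹ := by
      rw [Matrix.mul_sub, Matrix.nonsing_inv_mul _ (Matrix.isUnit_iff_isUnit_det _ |>.mp hB.isUnit),
        Matrix.sub_mul, one_mul, Matrix.mul_assoc, e1, mul_one]
    calc A⁻¹ - B⁻¹ = B⁻¹ * (B - A) * A⁻¹ := base.symm
      _ = B⁻¹ * (B - A) * (A⁻¹ * (B * B⁻¹)) := by rw [e3, mul_one]
      _ = B⁻¹ * (B - A) * (A⁻¹ * ((A + (B - A)) * B⁻¹)) := by rw [add_sub_cancel]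
      _ = B⁻¹ * (B - A) * B⁻¹ + B⁻¹ * (B - A) * A⁻¹ * ((B - A) * B⁻¹) := by
          rw [Matrix.add_mul, Matrix.mul_add, ← Matrix.mul_assoc A⁻¹ A, e2, one_mul]
          noncomm_ring
  rw [key]
  exact (h.mul_mul_conjTranspose_same B⁻¹).add
    ((hA.posSemidef.inv).mul_mul_conjTranspose_same (B⁻¹ * (B - A)))

lemma conj_mul_conj {U : Matrix (Fin n) (Fin n) ℝ} (hU : star U * U = 1)
    (f g : Fin n → ℝ) :
    (U * diagonal f * star U) * (U * diagonal g * star U)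
      = U * diagonal (fun i => f i * g i) * star U := by
  have h : diagonal f * (star U * U) * diagonal g = diagonal (fun i => f i * g i) := by
    rw [hU, mul_one, diagonal_mul_diagonal]
  calc (U * diagonal f * star U) * (U * diagonal g * star U)
      = U * (diagonal f * (star U * U) * diagonal g) * star U := by noncomm_ring
    _ = _ := by rw [h]

lemma conj_psd {U : Matrix (Fin n) (Fin n) ℝ} (f : Fin n → ℝ) (hf : ∀ i, 0 ≤ f i) :
    (U * diagonal f * star U).PosSemidef := by
  rw [Matrix.star_eq_conjTranspose]
  exact (Matrix.PosSemidef.diagonal hf).mul_mul_conjTranspose_same U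

lemma conj_trace {U : Matrix (Fin n) (Fin n) ℝ} (hU : star U * U = 1) (f : Fin n → ℝ) :
    (U * diagonal f * star U).trace = ∑ i, f i := by
  rw [Matrix.trace_mul_comm, ← Matrix.mul_assoc, hU, one_mul, Matrix.trace_diagonal]

lemma conj_smul {U : Matrix (Fin n) (Fin n) ℝ} (c : ℝ) (f : Fin n → ℝ) :
    c • (U * diagonal f * star U) = U * diagonal (fun i => c * f i) * star U := by
  have : Matrix.diagonal (fun i => c * f i) = c • diagonal f := by
    ext i j; by_cases h : i = j <;> simp [h]
  rw [this, Matrix.mul_smul, Matrix.smul_mul]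

lemma conj_sub {U : Matrix (Fin n) (Fin n) ℝ} (f g : Fin n → ℝ) :
    (U * diagonal f * star U) - (U * diagonal g * star U)
      = U * diagonal (fun i => f i - g i) * star U := by
  have : Matrix.diagonal (fun i => f i - g i) = diagonal f - diagonal g := by
    rw [diagonal_sub]
  rw [this, Matrix.mul_sub, Matrix.sub_mul]

lemma conj_one' {U : Matrix (Fin n) (Fin n) ℝ} (hU' : U * star U = 1) :
    U * diagonal (fun _ => (1:ℝ)) * star U = 1 := by
  rw [diagonal_one, mul_one, hU']

lemma spectral_real {A : Matrix (Fin n) (Fin n) ℝ} (hA : A.IsHermitian) :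
    A = (hA.eigenvectorUnitary : Matrix (Fin n) (Fin n) ℝ) * diagonal hA.eigenvalues
      * star (hA.eigenvectorUnitary : Matrix (Fin n) (Fin n) ℝ) := by
  simpa using hA.spectral_theorem

lemma addl_spec {A : Matrix (Fin n) (Fin n) ℝ} (hA : A.PosSemidef) (l : ℝ) :
    A + l • 1 = (hA.1.eigenvectorUnitary : Matrix (Fin n) (Fin n) ℝ)
      * diagonal (fun i => hA.1.eigenvalues i + l)
      * star (hA.1.eigenvectorUnitary : Matrix (Fin n) (Fin n) ℝ) := by
  set U := (hA.1.eigenvectorUnitary : Matrix (Fin n) (Fin n) ℝ) with hUdef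
  have hU' : U * star U = 1 := (Matrix.mem_unitaryGroup_iff).mp hA.1.eigenvectorUnitary.2
  have hd : (diagonal fun _ : Fin n => l) = l • (1 : Matrix (Fin n) (Fin n) ℝ) := by
    ext i j; by_cases h : i = j <;> simp [h, Matrix.one_apply]
  have h1 : l • (1 : Matrix (Fin n) (Fin n) ℝ) = U * diagonal (fun _ => l) * star U := by
    rw [hd, mul_smul_comm, mul_one, Matrix.smul_mul, hU']
  have hdd : diagonal hA.1.eigenvalues + diagonal (fun _ : Fin n => l)
      = diagonal (fun i => hA.1.eigenvalues i + l) := by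
    rw [diagonal_add]
  conv_lhs => rw [spectral_real hA.1, h1]
  rw [← Matrix.add_mul, ← Matrix.mul_add, hdd]

lemma inv_addl_spec {A : Matrix (Fin n) (Fin n) ℝ} (hA : A.PosSemidef) {l : ℝ} (hl : 0 < l) :
    (A + l • 1)⁻¹ = (hA.1.eigenvectorUnitary : Matrix (Fin n) (Fin n) ℝ)
      * diagonal (fun i => (hA.1.eigenvalues i + l)⁻¹)
      * star (hA.1.eigenvectorUnitary : Matrix (Fin n) (Fin n) ℝ) := by
  have hU : star (hA.1.eigenvectorUnitary : Matrix (Fin n) (Fin n) ℝ)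
      * (hA.1.eigenvectorUnitary : Matrix (Fin n) (Fin n) ℝ) = 1 :=
    (Matrix.mem_unitaryGroup_iff').mp hA.1.eigenvectorUnitary.2
  have hU' : (hA.1.eigenvectorUnitary : Matrix (Fin n) (Fin n) ℝ)
      * star (hA.1.eigenvectorUnitary : Matrix (Fin n) (Fin n) ℝ) = 1 :=
    (Matrix.mem_unitaryGroup_iff).mp hA.1.eigenvectorUnitary.2
  apply Matrix.inv_eq_right_inv
  rw [addl_spec hA l, conj_mul_conj hU]
  have hfun : (fun i => (hA.1.eigenvalues i + l) * (hA.1.eigenvalues i + l)⁻¹)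
      = fun _ : Fin n => (1:ℝ) := by
    funext i
    exact mul_inv_cancel₀ (by have := hA.eigenvalues_nonneg i; linarith)
  rw [hfun, conj_one' hU']

lemma conj_conj {U : Matrix (Fin n) (Fin n) ℝ} (hU : star U * U = 1) (f : Fin n → ℝ) :
    star U * (U * diagonal f * star U) * U = diagonal f := by
  rw [← Matrix.mul_assoc, ← Matrix.mul_assoc, hU, one_mul, Matrix.mul_assoc, hU, mul_one]

lemma scalar_key {e l b Δ₁ Δ₂ : ℝ} (he : 0 ≤ e) (hl : 0 < l)
    (hΔ₁0 : 0 ≤ Δ₁) (hΔ₁1 : Δ₁ < 1) (hΔ₂ : 0 ≤ Δ₂)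
    (hb : 0 ≤ (e+l)⁻¹ - (1+Δ₂)⁻¹ * b) (hc : 0 ≤ 1 - l * b) :
    e*e*((e+l)⁻¹*(e+l)⁻¹) ≤ Δ₂/(1+Δ₂) * (if e ≠ 0 then 1 else 0) + (1-Δ₁)⁻¹*(1 - l*b) := by
  have ht : 0 < e + l := by linarith
  have h1Δ : 0 < 1 - Δ₁ := by linarith
  have h2Δ : 0 < 1 + Δ₂ := by linarith
  by_cases h0 : e = 0
  · subst h0
    norm_num
    positivity
  · simp only [ne_eq, h0, not_false_eq_true, if_true, mul_one]
    have he' : 0 < e := lt_of_le_of_ne he (Ne.symm h0)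
    have hu : 0 < (e+l)⁻¹ := inv_pos.mpr ht
    have htu : (e+l) * (e+l)⁻¹ = 1 := mul_inv_cancel₀ ht.ne'
    have hx1 : e * (e+l)⁻¹ ≤ 1 := by nlinarith
    have hx0 : 0 ≤ e * (e+l)⁻¹ := by positivity
    have hL : e*e*((e+l)⁻¹*(e+l)⁻¹) ≤ e*(e+l)⁻¹ := by nlinarith
    have hxe : e * (e+l)⁻¹ = 1 - l * (e+l)⁻¹ := by linear_combination htu
    have hbu : l * ((1+Δ₂)⁻¹ * b) ≤ l * (e+l)⁻¹ := by nlinarith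
    have hinvle : (1+Δ₂)⁻¹ ≤ (1-Δ₁)⁻¹ := by
      apply inv_anti₀ h1Δ (by linarith)
    have last : (1 - l*b) * (1+Δ₂)⁻¹ ≤ (1 - l*b)*(1-Δ₁)⁻¹ :=
      mul_le_mul_of_nonneg_left hinvle hc
    have hid : 1 - l*((1+Δ₂)⁻¹*b) = Δ₂/(1+Δ₂) + (1 - l*b)*(1+Δ₂)⁻¹ := by
      field_simp
      ring
    calc e*e*((e+l)⁻¹*(e+l)⁻¹) ≤ e*(e+l)⁻¹ := hL
      _ = 1 - l * (e+l)⁻¹ := hxe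
      _ ≤ 1 - l*((1+Δ₂)⁻¹*b) := by linarith
      _ = Δ₂/(1+Δ₂) + (1 - l*b)*(1+Δ₂)⁻¹ := hid
      _ ≤ Δ₂/(1+Δ₂) + (1-Δ₁)⁻¹*(1 - l*b) := by linarith [last]

end Helpers

set_option maxHeartbeats 1600000 in
theorem stmt8 {n : ℕ} (hn : 0 < n) (K Kt : Matrix (Fin n) (Fin n) ℝ) (m : ℕ)
    (hK : K.PosSemidef) (hKt : Kt.PosSemidef) (hrank : Kt.rank = m)
    (l Δ₁ Δ₂ σ : ℝ) (hl : 0 < l) (hΔ₁ : Δ₁ ∈ Set.Ico (0 : ℝ) 1) (hΔ₂ : 0 ≤ Δ₂)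
    (h1 : ((Kt + l • 1) - (1 - Δ₁) • (K + l • 1)).PosSemidef)
    (h2 : ((1 + Δ₂) • (K + l • 1) - (Kt + l • 1)).PosSemidef)
    (y : Fin n → ℝ) :
    (l ^ 2 / n) * (y ⬝ᵥ ((Kt + l • 1)⁻¹ ^ 2 *ᵥ y)) +
        (σ ^ 2 / n) * (Kt ^ 2 * (Kt + l • 1)⁻¹ ^ 2).trace ≤
      (1 / (1 - Δ₁)) * ((l / n) * (y ⬝ᵥ ((K + l • 1)⁻¹ *ᵥ y)) +
          (σ ^ 2 / n) * (K * (K + l • 1)⁻¹).trace) +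
        (Δ₂ / (1 + Δ₂)) * (m / n) * σ ^ 2 := by
  obtain ⟨hΔ₁0, hΔ₁1⟩ := hΔ₁
  have h1Δ : (0:ℝ) < 1 - Δ₁ := by linarith
  have h2Δ : (0:ℝ) < 1 + Δ₂ := by linarith
  have hnR : (0:ℝ) < n := by exact_mod_cast hn
  have hKtPD : (Kt + l • 1).PosDef := add_smul_one_posDef hKt hl
  have hKPD : (K + l • 1).PosDef := add_smul_one_posDef hK hl
  have hKdet : IsUnit (K + l • 1).det := (Matrix.isUnit_iff_isUnit_det _).mp hKPD.isUnit
  set e : Fin n → ℝ := hKt.1.eigenvalues with he_def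
  set U : Matrix (Fin n) (Fin n) ℝ := (hKt.1.eigenvectorUnitary : Matrix (Fin n) (Fin n) ℝ)
    with hU_def
  have hU : star U * U = 1 := (Matrix.mem_unitaryGroup_iff').mp hKt.1.eigenvectorUnitary.2
  have hU' : U * star U = 1 := (Matrix.mem_unitaryGroup_iff).mp hKt.1.eigenvectorUnitary.2
  have hepos : ∀ i, 0 < e i + l := fun i => by have := hKt.eigenvalues_nonneg i; linarith
  have hKtinv : (Kt + l • 1)⁻¹ = U * diagonal (fun i => (e i + l)⁻¹) * star U :=
    inv_addl_spec hKt hl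
  have hKtinv2 : (Kt + l • 1)⁻¹ ^ 2
      = U * diagonal (fun i => (e i + l)⁻¹ * (e i + l)⁻¹) * star U := by
    rw [sq, hKtinv, conj_mul_conj hU]
  have hKt2 : Kt ^ 2 = U * diagonal (fun i => e i * e i) * star U := by
    conv_lhs => rw [sq, spectral_real hKt.1]
    rw [conj_mul_conj hU]
  have hS : (Kt ^ 2 * (Kt + l • 1)⁻¹ ^ 2).trace
      = ∑ i, (e i * e i) * ((e i + l)⁻¹ * (e i + l)⁻¹) := by
    rw [hKt2, hKtinv2, conj_mul_conj hU, conj_trace hU]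
  -- bias chain
  have bias1 : (l • (Kt + l • 1)⁻¹ - l ^ 2 • ((Kt + l • 1)⁻¹ ^ 2)).PosSemidef := by
    rw [hKtinv2, hKtinv, conj_smul, conj_smul, conj_sub]
    apply conj_psd
    intro i
    have hu : 0 < (e i + l)⁻¹ := inv_pos.mpr (hepos i)
    have htu : (e i + l) * (e i + l)⁻¹ = 1 := mul_inv_cancel₀ (hepos i).ne'
    have hle : l * (e i + l)⁻¹ ≤ 1 := by
      have h := hKt.eigenvalues_nonneg i
      nlinarith
    have hnn := mul_nonneg (mul_pos hl hu).le (by linarith : (0:ℝ) ≤ 1 - l * (e i + l)⁻¹)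
    nlinarith [hnn]
  have step1 : l ^ 2 * (y ⬝ᵥ ((Kt + l • 1)⁻¹ ^ 2 *ᵥ y))
      ≤ l * (y ⬝ᵥ ((Kt + l • 1)⁻¹ *ᵥ y)) := by
    simpa [Matrix.smul_mulVec, dotProduct_smul, smul_eq_mul] using psd_dot_le bias1 y
  have hApd : ((1 - Δ₁) • (K + l • 1)).PosDef := smul_posDef hKPD h1Δ
  have hAinv : ((1 - Δ₁) • (K + l • 1))⁻¹ = (1 - Δ₁)⁻¹ • (K + l • 1)⁻¹ := by
    apply Matrix.inv_eq_right_inv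
    rw [Matrix.smul_mul, Matrix.mul_smul, smul_smul, Matrix.mul_nonsing_inv _ hKdet,
      mul_inv_cancel₀ h1Δ.ne', one_smul]
  have mono1 := inv_antitone hApd hKtPD h1
  have step2 : (y ⬝ᵥ ((Kt + l • 1)⁻¹ *ᵥ y))
      ≤ (1 - Δ₁)⁻¹ * (y ⬝ᵥ ((K + l • 1)⁻¹ *ᵥ y)) := by
    rw [hAinv] at mono1
    simpa [Matrix.smul_mulVec, dotProduct_smul, smul_eq_mul] using psd_dot_le mono1 y
  -- trace side for K
  have hKinvid : K * (K + l • 1)⁻¹ = 1 - l • (K + l • 1)⁻¹ := by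
    have hKeq : K = (K + l • 1) - l • 1 := by abel
    calc K * (K + l • 1)⁻¹ = ((K + l • 1) - l • 1) * (K + l • 1)⁻¹ := by rw [← hKeq]
      _ = (K + l • 1) * (K + l • 1)⁻¹ - (l • 1) * (K + l • 1)⁻¹ := Matrix.sub_mul _ _ _
      _ = 1 - l • (K + l • 1)⁻¹ := by
          rw [Matrix.mul_nonsing_inv _ hKdet, Matrix.smul_mul, one_mul]
  set b : Fin n → ℝ := fun i => (star U * (K + l • 1)⁻¹ * U) i i with hb_def
  have htrinv : ((K + l • 1)⁻¹).trace = ∑ i, b i := by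
    have hconj : (star U * (K + l • 1)⁻¹ * U).trace = ((K + l • 1)⁻¹).trace := by
      rw [Matrix.trace_mul_comm, ← Matrix.mul_assoc, hU', one_mul]
    rw [← hconj]
    rfl
  have hT : (K * (K + l • 1)⁻¹).trace = ∑ i, (1 - l * b i) := by
    rw [hKinvid, Matrix.trace_sub, Matrix.trace_smul, Matrix.trace_one, htrinv,
      Finset.sum_sub_distrib, Finset.sum_const]
    simp [Finset.mul_sum, smul_eq_mul]
  -- fact c : ∀ i, l * b i ≤ 1
  have hKspec_psd : ((1 : Matrix (Fin n) (Fin n) ℝ) - l • (K + l • 1)⁻¹).PosSemidef := by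
    have hV' : (hK.1.eigenvectorUnitary : Matrix (Fin n) (Fin n) ℝ)
        * star (hK.1.eigenvectorUnitary : Matrix (Fin n) (Fin n) ℝ) = 1 :=
      (Matrix.mem_unitaryGroup_iff).mp hK.1.eigenvectorUnitary.2
    rw [inv_addl_spec hK hl, conj_smul, ← conj_one' hV', conj_sub]
    apply conj_psd
    intro i
    have hfpos : 0 < hK.1.eigenvalues i + l := by have := hK.eigenvalues_nonneg i; linarith
    have htu : (hK.1.eigenvalues i + l) * (hK.1.eigenvalues i + l)⁻¹ = 1 :=
      mul_inv_cancel₀ hfpos.ne'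
    have hu : 0 < (hK.1.eigenvalues i + l)⁻¹ := inv_pos.mpr hfpos
    have := hK.eigenvalues_nonneg i
    nlinarith
  have factc : ∀ i, 0 ≤ 1 - l * b i := by
    intro i
    have hM : (star U * ((1 : Matrix (Fin n) (Fin n) ℝ) - l • (K + l • 1)⁻¹) * U).PosSemidef := by
      rw [Matrix.star_eq_conjTranspose]
      exact hKspec_psd.conjTranspose_mul_mul_same U
    have hexp : star U * ((1 : Matrix (Fin n) (Fin n) ℝ) - l • (K + l • 1)⁻¹) * U
        = 1 - l • (star U * (K + l • 1)⁻¹ * U) := by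
      rw [Matrix.mul_sub, Matrix.sub_mul, mul_one, hU, Matrix.mul_smul, Matrix.smul_mul,
        Matrix.mul_assoc]
    have hdiag := psd_diag_nonneg hM i
    rw [hexp] at hdiag
    simpa [Matrix.sub_apply, Matrix.one_apply, Matrix.smul_apply, smul_eq_mul] using hdiag
  -- fact b
  have hBpd : ((1 + Δ₂) • (K + l • 1)).PosDef := smul_posDef hKPD h2Δ
  have hBinv : ((1 + Δ₂) • (K + l • 1))⁻¹ = (1 + Δ₂)⁻¹ • (K + l • 1)⁻¹ := by
    apply Matrix.inv_eq_right_inv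
    rw [Matrix.smul_mul, Matrix.mul_smul, smul_smul, Matrix.mul_nonsing_inv _ hKdet,
      mul_inv_cancel₀ h2Δ.ne', one_smul]
  have mono2 := inv_antitone hKtPD hBpd h2
  have factb : ∀ i, 0 ≤ (e i + l)⁻¹ - (1 + Δ₂)⁻¹ * b i := by
    intro i
    rw [hBinv] at mono2
    have hM : (star U * ((Kt + l • 1)⁻¹ - (1 + Δ₂)⁻¹ • (K + l • 1)⁻¹) * U).PosSemidef := by
      rw [Matrix.star_eq_conjTranspose]
      exact mono2.conjTranspose_mul_mul_same U
    have hexp : star U * ((Kt + l • 1)⁻¹ - (1 + Δ₂)⁻¹ • (K + l • 1)⁻¹) * U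
        = diagonal (fun i => (e i + l)⁻¹) - (1 + Δ₂)⁻¹ • (star U * (K + l • 1)⁻¹ * U) := by
      rw [Matrix.mul_sub, Matrix.sub_mul, hKtinv, conj_conj hU, Matrix.mul_smul,
        Matrix.smul_mul, Matrix.mul_assoc]
    have hdiag := psd_diag_nonneg hM i
    rw [hexp] at hdiag
    simpa [Matrix.sub_apply, Matrix.diagonal_apply_eq, Matrix.smul_apply, smul_eq_mul] using hdiag
  -- m as a sum
  have hmcard : m = Fintype.card {i // e i ≠ 0} := by
    rw [← hrank, hKt.1.rank_eq_card_non_zero_eigs]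
  have hm : (m:ℝ) = ∑ i, (if e i ≠ 0 then (1:ℝ) else 0) := by
    rw [hmcard, Fintype.card_subtype, Finset.card_filter]
    push_cast [apply_ite (Nat.cast : ℕ → ℝ)]
    rfl
  -- master trace inequality
  have B1 : (∑ i, (e i * e i) * ((e i + l)⁻¹ * (e i + l)⁻¹))
      ≤ Δ₂/(1+Δ₂) * (m:ℝ) + (1-Δ₁)⁻¹ * ∑ i, (1 - l * b i) := by
    have hsum := Finset.sum_le_sum (fun i (_ : i ∈ Finset.univ) =>
      scalar_key (hKt.eigenvalues_nonneg i) hl hΔ₁0 hΔ₁1 hΔ₂ (factb i) (factc i))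
    rw [Finset.sum_add_distrib, ← Finset.mul_sum, ← Finset.mul_sum, ← hm] at hsum
    exact hsum
  -- assembly
  rw [hS, hT]
  have key1 : l ^ 2 * (y ⬝ᵥ ((Kt + l • 1)⁻¹ ^ 2 *ᵥ y))
      ≤ (1-Δ₁)⁻¹ * (l * (y ⬝ᵥ ((K + l • 1)⁻¹ *ᵥ y))) := by
    have h := mul_le_mul_of_nonneg_left step2 hl.le
    nlinarith [step1]
  have key2 := mul_le_mul_of_nonneg_left B1 (sq_nonneg σ)
  have hninv : (0:ℝ) ≤ ((n:ℝ))⁻¹ := by positivity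
  calc (l ^ 2 / n) * (y ⬝ᵥ ((Kt + l • 1)⁻¹ ^ 2 *ᵥ y))
        + (σ ^ 2 / n) * (∑ i, (e i * e i) * ((e i + l)⁻¹ * (e i + l)⁻¹))
      = (l ^ 2 * (y ⬝ᵥ ((Kt + l • 1)⁻¹ ^ 2 *ᵥ y))
        + σ ^ 2 * (∑ i, (e i * e i) * ((e i + l)⁻¹ * (e i + l)⁻¹))) * ((n:ℝ))⁻¹ := by ring
    _ ≤ ((1-Δ₁)⁻¹ * (l * (y ⬝ᵥ ((K + l • 1)⁻¹ *ᵥ y)))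
        + (Δ₂/(1+Δ₂) * (m:ℝ) * σ ^ 2 + (1-Δ₁)⁻¹ * (σ ^ 2 * ∑ i, (1 - l * b i)))) * ((n:ℝ))⁻¹ := by
        apply mul_le_mul_of_nonneg_right _ hninv
        nlinarith [key1, key2]
    _ = (1 / (1 - Δ₁)) * ((l / n) * (y ⬝ᵥ ((K + l • 1)⁻¹ *ᵥ y))
          + (σ ^ 2 / n) * (∑ i, (1 - l * b i)))
        + (Δ₂ / (1 + Δ₂)) * (m / n) * σ ^ 2 := by
        rw [one_div]
        ring
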